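/- Failure of additivity for D₄: in the root system D₄ ⊂ ℝ⁴, let ω₃ = (1/2,1/2,1/2,−1/2), ω₄ = (1/2,1/2,1/2,1/2), and w₀ = −id. Then n(ω₃, w₀) = 2, n(ω₄, w₀) = 2, but n(ω₃ + ω₄, w₀) = 3; that is, the minimal number of positive roots of D₄ summing to (1,1,1,−1) is 2, to (1,1,1,1) is 2, and to (2,2,2,0) is 3. In particular, n(λ+μ, w₀) < n(λ,w₀) + n(μ,w₀) for the dominant weights λ = ω₃, μ = ω₄. -/

import Mathlib

/-- The positive roots of type `D₄` in `ℝ⁴`: the vectors `ε_i - ε_j` and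
`ε_i + ε_j` for `i < j`. -/
def d4PositiveRoots : Set (Fin 4 → ℝ) :=
  {v | ∃ i j : Fin 4, i < j ∧
    (v = Pi.single i 1 - Pi.single j 1 ∨ v = Pi.single i 1 + Pi.single j 1)}

/-- The set of lengths of decompositions of `v` into a sum of positive roots of
`D₄` (with repetitions). -/
def d4DecompLengths (v : Fin 4 → ℝ) : Set ℕ :=
  {N | ∃ l : List (Fin 4 → ℝ),
    (∀ u ∈ l, u ∈ d4PositiveRoots) ∧ l.sum = v ∧ l.length = N}

lemma d4_root_coord_sum {u : Fin 4 → ℝ} (hu : u ∈ d4PositiveRoots) :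
    u 0 + u 1 + u 2 + u 3 ≤ 2 := by
  obtain ⟨i, j, hij, h | h⟩ := hu <;> subst h <;>
    fin_cases i <;> fin_cases j <;> simp_all [Pi.single_apply] <;> norm_num

lemma d4_list_coord_sum {l : List (Fin 4 → ℝ)} (hl : ∀ u ∈ l, u ∈ d4PositiveRoots) :
    l.sum 0 + l.sum 1 + l.sum 2 + l.sum 3 ≤ 2 * l.length := by
  induction l with
  | nil => simp
  | cons a t ih =>
    have ha := d4_root_coord_sum (hl a (by simp))
    have ht := ih (fun u hu => hl u (by simp [hu]))
    simp only [List.sum_cons, Pi.add_apply, List.length_cons]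
    push_cast
    linarith

lemma d4_not_root : ![1, 1, 1, -1] ∉ d4PositiveRoots := by
  rintro ⟨i, j, hij, h | h⟩ <;>
    fin_cases i <;> fin_cases j <;>
      first
      | exact absurd hij (by decide)
      | · have h0 := congrFun h 0
          have h1 := congrFun h 1
          have h2 := congrFun h 2
          have h3 := congrFun h 3
          simp [Pi.single_apply] at h0 h1 h2 h3

theorem d4_additivity_failure :
    IsLeast (d4DecompLengths ![1, 1, 1, -1]) 2 ∧
    IsLeast (d4DecompLengths ![1, 1, 1, 1]) 2 ∧
    IsLeast (d4DecompLengths ![2, 2, 2, 0]) 3 := by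
  refine ⟨⟨?_, ?_⟩, ⟨?_, ?_⟩, ⟨?_, ?_⟩⟩
  · -- (1,1,1,-1) = (ε₁-ε₄) + (ε₂+ε₃)
    refine ⟨[Pi.single 0 1 - Pi.single 3 1, Pi.single 1 1 + Pi.single 2 1], ?_, ?_, rfl⟩
    · rintro u hu
      simp only [List.mem_cons, List.not_mem_nil, or_false] at hu
      rcases hu with h | h <;> subst h
      · exact ⟨0, 3, by decide, Or.inl rfl⟩
      · exact ⟨1, 2, by decide, Or.inr rfl⟩
    · funext x; fin_cases x <;> simp [Pi.single_apply] <;> norm_num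
  · rintro N ⟨l, hl, hsum, hlen⟩
    rcases l with _ | ⟨a, t⟩
    · exfalso
      have := congrFun hsum 0
      simp at this
    rcases t with _ | ⟨b, t⟩
    · exfalso
      have : a = ![1, 1, 1, -1] := by simpa using hsum
      exact d4_not_root (this ▸ hl a (by simp))
    · simp only [List.length_cons] at hlen; omega
  · -- (1,1,1,1) = (ε₁+ε₂) + (ε₃+ε₄)
    refine ⟨[Pi.single 0 1 + Pi.single 1 1, Pi.single 2 1 + Pi.single 3 1], ?_, ?_, rfl⟩
    · rintro u hu
      simp only [List.mem_cons, List.not_mem_nil, or_false] at hu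
      rcases hu with h | h <;> subst h
      · exact ⟨0, 1, by decide, Or.inr rfl⟩
      · exact ⟨2, 3, by decide, Or.inr rfl⟩
    · funext x; fin_cases x <;> simp [Pi.single_apply] <;> norm_num
  · rintro N ⟨l, hl, hsum, hlen⟩
    have h := d4_list_coord_sum hl
    rw [hsum, hlen] at h
    norm_num at h
    have : (2:ℝ) ≤ N := by change (2:ℝ) + 1 + 1 ≤ 2 * (N:ℝ) at h; linarith
    exact_mod_cast this
  · -- (2,2,2,0) = (ε₁+ε₂) + (ε₁+ε₃) + (ε₂+ε₃)
    refine ⟨[Pi.single 0 1 + Pi.single 1 1, Pi.single 0 1 + Pi.single 2 1,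
        Pi.single 1 1 + Pi.single 2 1], ?_, ?_, rfl⟩
    · rintro u hu
      simp only [List.mem_cons, List.not_mem_nil, or_false] at hu
      rcases hu with h | h | h <;> subst h
      · exact ⟨0, 1, by decide, Or.inr rfl⟩
      · exact ⟨0, 2, by decide, Or.inr rfl⟩
      · exact ⟨1, 2, by decide, Or.inr rfl⟩
    · funext x; fin_cases x <;> simp [Pi.single_apply] <;> norm_num
  · rintro N ⟨l, hl, hsum, hlen⟩
    have h := d4_list_coord_sum hl
    rw [hsum, hlen] at h
    norm_num at h
    have : (3:ℝ) ≤ N := by change (4:ℝ) + 2 + 0 ≤ 2 * (N:ℝ) at h; linarith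
    exact_mod_cast this
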